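/- Define a_n = 0 unless n is a power of 2, a_1 = 1, and a_{2^k} = −1 for k ≥ 1. Then Tf(x) = f(x) − f(2x) − f(4x) − f(8x) − ⋯ satisfies ‖Tf‖² = 2‖f‖² for all f ∈ L²[0,∞). -/

import Mathlib

open MeasureTheory Set
open scoped ENNReal NNReal

noncomputable def ν : Measure ℝ := volume.restrict (Set.Ioi (0:ℝ))

/-- `T(a)f(x) = ∑_{n≥1} a_n f(n x)`. -/
noncomputable def Tfun (a : ℕ → ℂ) (f : ℝ → ℂ) : ℝ → ℂ :=
  fun x => ∑' n : ℕ, a (n + 1) * f ((n + 1) * x)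

/-- The sequence with `a 1 = 1`, `a (2^k) = -1` for `k ≥ 1`, `a n = 0` otherwise. -/
noncomputable def aSeq8 : ℕ → ℂ := fun n =>
  if n = 1 then 1 else if n = 2 ^ Nat.log 2 n then (-1 : ℂ) else 0

instance : SigmaFinite ν := by unfold ν; infer_instance
instance : Measure.Regular ν := by unfold ν; infer_instance
instance : IsFiniteMeasureOnCompacts ν := by unfold ν; infer_instance

noncomputable def cc : ℕ → ℂ := fun k => if k = 0 then 1 else -1

lemma cc_zero : cc 0 = 1 := rfl
lemma cc_succ (k : ℕ) : cc (k + 1) = -1 := rfl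
lemma cc_norm (k : ℕ) : ‖cc k‖ = 1 := by cases k <;> simp [cc]
lemma cc_conj (k : ℕ) : (starRingEnd ℂ) (cc k) = cc k := by cases k <;> simp [cc]

lemma two_pow_pred_injective : Function.Injective (fun k : ℕ => 2 ^ k - 1) := by
  intro a b hab
  simp only at hab
  have ha : 1 ≤ 2 ^ a := Nat.one_le_two_pow
  have hb : 1 ≤ 2 ^ b := Nat.one_le_two_pow
  have h : (2:ℕ) ^ a = 2 ^ b := by omega
  exact Nat.pow_right_injective le_rfl h

lemma aSeq8_one : aSeq8 1 = 1 := by simp [aSeq8]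

lemma aSeq8_two_pow (k : ℕ) : aSeq8 (2 ^ (k + 1)) = -1 := by
  have h1 : (2:ℕ) ^ (k + 1) ≠ 1 := by
    have : (1:ℕ) < 2 ^ (k + 1) := Nat.one_lt_two_pow_iff.mpr (by omega)
    omega
  have h2 : Nat.log 2 (2 ^ (k + 1)) = k + 1 := Nat.log_pow one_lt_two (k + 1)
  simp [aSeq8, h1, h2]

lemma Tfun_eq (f : ℝ → ℂ) (x : ℝ) :
    Tfun aSeq8 f x = ∑' k : ℕ, cc k * f ((2:ℝ) ^ k * x) := by
  have hsupp : Function.support (fun n : ℕ => aSeq8 (n + 1) * f ((n + 1 : ℝ) * x))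
      ⊆ Set.range (fun k : ℕ => 2 ^ k - 1) := by
    intro n hn
    have ha : aSeq8 (n + 1) ≠ 0 := by
      intro h
      apply hn
      simp [Function.mem_support, h]
    by_cases h1 : n + 1 = 1
    · exact ⟨0, by show 2 ^ 0 - 1 = n; omega⟩
    · by_cases h2 : n + 1 = 2 ^ Nat.log 2 (n + 1)
      · exact ⟨Nat.log 2 (n + 1), by show 2 ^ Nat.log 2 (n+1) - 1 = n; omega⟩
      · exact absurd (by simp [aSeq8, h1, h2]; omega) ha
  rw [Tfun, ← two_pow_pred_injective.tsum_eq hsupp]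
  refine tsum_congr fun k => ?_
  have h1 : (2:ℕ) ^ k - 1 + 1 = 2 ^ k := Nat.sub_add_cancel Nat.one_le_two_pow
  have hcast : ((2 ^ k - 1 : ℕ) : ℝ) + 1 = (2:ℝ) ^ k := by
    rw [Nat.cast_sub Nat.one_le_two_pow]
    push_cast
    ring
  simp only [h1, hcast]
  cases k with
  | zero => simp [aSeq8_one, cc_zero]
  | succ k => rw [aSeq8_two_pow, cc_succ]

lemma lintegral_nnnorm_le (φ : ℝ → ℂ) (C r : ℝ) (hC : 0 ≤ C)
    (hsupp : ∀ x, φ x ≠ 0 → x ∈ Set.Ioc 0 r) (hbound : ∀ x, ‖φ x‖ ≤ C) :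
    ∫⁻ x, ‖φ x‖₊ ∂ν ≤ ENNReal.ofReal C * ENNReal.ofReal r := by
  have h1 : ∀ x, (‖φ x‖₊ : ℝ≥0∞) ≤ (Set.Ioc (0:ℝ) r).indicator (fun _ => ENNReal.ofReal C) x := by
    intro x
    by_cases hx : φ x = 0
    · simp [hx]
    · rw [Set.indicator_of_mem (hsupp x hx)]
      rw [← enorm_eq_nnnorm, ← ofReal_norm]
      exact ENNReal.ofReal_le_ofReal (hbound x)
  calc ∫⁻ x, ‖φ x‖₊ ∂ν
      ≤ ∫⁻ x, (Set.Ioc (0:ℝ) r).indicator (fun _ => ENNReal.ofReal C) x ∂ν :=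
        lintegral_mono h1
    _ = ENNReal.ofReal C * ν (Set.Ioc 0 r) := by
        rw [lintegral_indicator measurableSet_Ioc, setLIntegral_const]
    _ ≤ ENNReal.ofReal C * ENNReal.ofReal r := by
        gcongr
        have : ν (Set.Ioc 0 r) = volume (Set.Ioc (0:ℝ) r) := by
          unfold ν
          rw [Measure.restrict_apply measurableSet_Ioc]
          congr 1
          exact Set.inter_eq_left.mpr Set.Ioc_subset_Ioi_self
        rw [this, Real.volume_Ioc]
        exact ENNReal.ofReal_le_ofReal (by linarith)
section Key

variable {f : ℝ → ℂ}

lemma key (hfc : Continuous f) (hfs : HasCompactSupport f)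
    (hts : tsupport f ⊆ Set.Ioi 0) (hg2 : MemLp (Tfun aSeq8 f) 2 ν) :
    ∫ x, Tfun aSeq8 f x * (starRingEnd ℂ) (Tfun aSeq8 f x) ∂ν
      = 2 * ∫ x, f x * (starRingEnd ℂ) (f x) ∂ν := by
  have hconjc : Continuous (fun z : ℂ => (starRingEnd ℂ) z) := by
    simp only [starRingEnd_apply]; exact continuous_star
  set g : ℝ → ℂ := Tfun aSeq8 f with hgdef
  have hg : ∀ x, g x = ∑' k : ℕ, cc k * f ((2:ℝ) ^ k * x) := fun x => Tfun_eq f x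
  -- support bounds
  obtain ⟨ε, hε, R, hεR, hfR⟩ :
      ∃ ε, 0 < ε ∧ ∃ R, ε ≤ R ∧ ∀ y, f y ≠ 0 → ε ≤ y ∧ y ≤ R := by
    rcases Set.eq_empty_or_nonempty (tsupport f) with h | hne
    · refine ⟨1, one_pos, 1, le_rfl, fun y hy => absurd ?_ (Set.notMem_empty y)⟩
      rw [← h]; exact subset_tsupport f hy
    · have hbb : BddBelow (tsupport f) := hfs.bddBelow
      have hba : BddAbove (tsupport f) := hfs.bddAbove
      have hmem : sInf (tsupport f) ∈ tsupport f := hfs.sInf_mem hne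
      refine ⟨sInf (tsupport f), hts hmem, sSup (tsupport f),
        csInf_le_csSup hne hbb hba, fun y hy => ?_⟩
      have hy' : y ∈ tsupport f := subset_tsupport f hy
      exact ⟨csInf_le hbb hy', le_csSup hba hy'⟩
  have hf0 : ∀ y : ℝ, y ≤ 0 → f y = 0 := by
    intro y hy
    by_contra h
    linarith [(hfR y h).1]
  obtain ⟨B, hB0, hBf⟩ : ∃ B, 0 ≤ B ∧ ∀ y, ‖f y‖ ≤ B := by
    obtain ⟨x₀, hx₀⟩ := (hfc.norm).exists_forall_ge_of_hasCompactSupport hfs.norm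
    exact ⟨‖f x₀‖, norm_nonneg _, hx₀⟩
  obtain ⟨M, hM⟩ : ∃ M : ℕ, R < 2 ^ M * ε := by
    obtain ⟨M, hM⟩ := pow_unbounded_of_one_lt (R / ε) one_lt_two
    refine ⟨M, ?_⟩
    rw [div_lt_iff₀ hε] at hM
    linarith
  have hM2 : ∀ (m : ℕ) (y : ℝ), M ≤ m → ε ≤ y → f ((2:ℝ) ^ m * y) = 0 := by
    intro m y hm hy
    by_contra h
    have h1 := (hfR _ h).2
    have h2 : (2:ℝ) ^ M * ε ≤ 2 ^ m * y :=
      mul_le_mul (pow_le_pow_right₀ one_le_two hm) hy hε.le (pow_nonneg (by norm_num) m)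
    linarith
  -- window
  have hwin : ∀ x : ℝ, ∃ s : Finset ℕ, s.card ≤ M + 1 ∧ ∀ k ∉ s, f ((2:ℝ) ^ k * x) = 0 := by
    intro x
    by_cases hex : ∃ k : ℕ, f ((2:ℝ) ^ k * x) ≠ 0
    · classical
      have hj₀ : f ((2:ℝ) ^ (Nat.find hex) * x) ≠ 0 := Nat.find_spec hex
      set j₀ := Nat.find hex with hj₀def
      refine ⟨Finset.Icc j₀ (j₀ + M), by rw [Nat.card_Icc]; omega, fun k hk => ?_⟩
      rw [Finset.mem_Icc] at hk
      push_neg at hk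
      rcases lt_or_ge k j₀ with hlt | hge
      · have := Nat.find_min hex hlt
        simpa using this
      · have hk2 : j₀ + M < k := hk hge
        by_contra hne
        have h1 := hfR _ hne
        have h0 := hfR _ hj₀
        have hx : 0 < x := by
          rcases le_or_gt x 0 with hx0 | hx0
          · exfalso
            have : (2:ℝ) ^ j₀ * x ≤ 0 :=
              mul_nonpos_of_nonneg_of_nonpos (pow_nonneg (by norm_num) _) hx0
            linarith [h0.1]
          · exact hx0
        have hpow : (2:ℝ) ^ (M + 1 + j₀) ≤ 2 ^ k :=
          pow_le_pow_right₀ one_le_two (by omega)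
        have e1 : (2:ℝ) ^ (M + 1 + j₀) * x = 2 ^ (M + 1) * ((2:ℝ) ^ j₀ * x) := by
          rw [pow_add]; ring
        have e2 : (2:ℝ) ^ (M + 1) * ε ≤ 2 ^ (M + 1) * ((2:ℝ) ^ j₀ * x) :=
          mul_le_mul_of_nonneg_left h0.1 (pow_nonneg (by norm_num) _)
        have e3 : (2:ℝ) ^ (M + 1 + j₀) * x ≤ 2 ^ k * x :=
          mul_le_mul_of_nonneg_right hpow hx.le
        have e4 : (2:ℝ) ^ M * ε ≤ 2 ^ (M + 1) * ε := by
          have : (2:ℝ) ^ M ≤ 2 ^ (M + 1) := pow_le_pow_right₀ one_le_two (by omega)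
          exact mul_le_mul_of_nonneg_right this hε.le
        have e5 : (2:ℝ) ^ (M+1) * ε ≤ 2 ^ (M+1+ j₀) * x := by rw [e1]; exact e2
        linarith [h1.2]
    · push_neg at hex
      exact ⟨∅, by simp, fun k _ => hex k⟩
  have hsumm : ∀ x : ℝ, Summable (fun k : ℕ => cc k * f ((2:ℝ) ^ k * x)) := by
    intro x
    obtain ⟨s, _, hs⟩ := hwin x
    exact summable_of_ne_finset_zero fun k hk => by rw [hs k hk, mul_zero]
  have hsummf : ∀ x : ℝ, Summable (fun k : ℕ => f ((2:ℝ) ^ k * x)) := by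
    intro x
    obtain ⟨s, _, hs⟩ := hwin x
    exact summable_of_ne_finset_zero fun k hk => hs k hk
  have hgb : ∀ x, ‖g x‖ ≤ (M + 1 : ℝ) * B := by
    intro x
    obtain ⟨s, hcard, hs⟩ := hwin x
    rw [hg x, tsum_eq_sum (fun k hk => by rw [hs k hk, mul_zero])]
    calc ‖∑ k ∈ s, cc k * f ((2:ℝ) ^ k * x)‖
        ≤ ∑ k ∈ s, ‖cc k * f ((2:ℝ) ^ k * x)‖ := norm_sum_le _ _
      _ ≤ ∑ _k ∈ s, B := Finset.sum_le_sum fun k _ => by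
          rw [norm_mul, cc_norm, one_mul]; exact hBf _
      _ = (s.card : ℝ) * B := by rw [Finset.sum_const, nsmul_eq_mul]
      _ ≤ (M + 1 : ℝ) * B := by
          apply mul_le_mul_of_nonneg_right _ hB0
          exact_mod_cast hcard
  -- the auxiliary tail function
  set hh : ℝ → ℂ := fun x => ∑' k : ℕ, f ((2:ℝ) ^ k * x) with hhdef
  have hshift : ∀ x : ℝ, (∑' k : ℕ, f ((2:ℝ) ^ (k + 1) * x)) = hh (2 * x) := by
    intro x
    simp only [hhdef]
    exact tsum_congr fun k => congrArg f (by rw [pow_succ]; ring)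
  have hgfh : ∀ x, g x = f x - hh (2 * x) := by
    intro x
    rw [hg x, Summable.tsum_eq_zero_add (hsumm x)]
    have h2 : (∑' k : ℕ, cc (k + 1) * f ((2:ℝ) ^ (k + 1) * x))
        = - ∑' k : ℕ, f ((2:ℝ) ^ (k + 1) * x) := by
      rw [← tsum_neg]
      exact tsum_congr fun k => by rw [cc_succ]; ring
    rw [h2, hshift x, cc_zero, pow_zero, one_mul, one_mul, sub_eq_add_neg]
  have hhfh : ∀ x, hh x = f x + hh (2 * x) := by
    intro x
    have : hh x = ∑' k : ℕ, f ((2:ℝ) ^ k * x) := by simp only [hhdef]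
    rw [this, Summable.tsum_eq_zero_add (hsummf x), hshift x, pow_zero, one_mul]
  have hrec : ∀ x : ℝ, g x = f x - 2 * f (2 * x) + g (2 * x) := by
    intro x
    rw [hgfh x, hgfh (2 * x), hhfh (2 * x)]
    ring
  have hGk : ∀ (k : ℕ) (u : ℝ),
      g (u / 2 ^ k) = f (u / 2 ^ k) - (∑ i ∈ Finset.range k, f (u / 2 ^ i)) - f u + g u := by
    intro k
    induction k with
    | zero => intro u; simp
    | succ k ih =>
      intro u
      have e1 : (2:ℝ) * (u / 2 ^ (k + 1)) = u / 2 ^ k := by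
        rw [pow_succ]
        field_simp
      have h := hrec (u / 2 ^ (k + 1))
      rw [e1] at h
      rw [h, ih u, Finset.sum_range_succ]
      ring
  -- change of variables
  have hCoV : ∀ b : ℝ, 0 < b → ∀ φ : ℝ → ℂ,
      ∫ x, φ (b * x) ∂ν = ((b:ℂ))⁻¹ * ∫ x, φ x ∂ν := by
    intro b hb φ
    have h := MeasureTheory.integral_comp_mul_left_Ioi φ 0 hb
    rw [mul_zero] at h
    have h2 : ∫ x, φ (b * x) ∂ν = b⁻¹ • ∫ x, φ x ∂ν := h
    rw [h2, Complex.real_smul, Complex.ofReal_inv]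
  have hCoV' : ∀ b : ℝ, 0 < b → ∀ φ : ℝ → ℂ,
      ∫ x, φ x ∂ν = (b:ℂ) * ∫ x, φ (b * x) ∂ν := by
    intro b hb φ
    rw [hCoV b hb φ, ← mul_assoc, mul_inv_cancel₀ (by exact_mod_cast hb.ne'), one_mul]
  -- the fundamental integrals
  set Pb : ℕ → ℂ := fun m => ∫ x, f x * (starRingEnd ℂ) (f ((2:ℝ) ^ m * x)) ∂ν with hPbdef
  have hPb0 : Pb 0 = ∫ x, f x * (starRingEnd ℂ) (f x) ∂ν := by
    simp only [hPbdef, pow_zero, one_mul]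
  have hPbzero : ∀ m, M ≤ m → Pb m = 0 := by
    intro m hm
    have hz : ∀ x : ℝ, f x * (starRingEnd ℂ) (f ((2:ℝ) ^ m * x)) = 0 := by
      intro x
      by_cases hx : f x = 0
      · rw [hx, zero_mul]
      · rw [hM2 m x hm (hfR x hx).1, map_zero, mul_zero]
    simp only [hPbdef, hz, integral_zero]
  -- integrability
  have hfcs : ∀ i : ℕ, Integrable (fun u => f (u / (2:ℝ) ^ i) * (starRingEnd ℂ) (f u)) ν := by
    intro i
    apply Continuous.integrable_of_hasCompactSupport
    · exact (hfc.comp (continuous_id.div_const _)).mul (hconjc.comp hfc)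
    · exact (hfs.comp_left (map_zero _)).mul_left
  have hfint : Integrable (fun u => f u * (starRingEnd ℂ) (f u)) ν := by
    apply Continuous.integrable_of_hasCompactSupport
    · exact hfc.mul (hconjc.comp hfc)
    · exact (hfs.comp_left (map_zero _)).mul_left
  have hgaem : AEStronglyMeasurable g ν := hg2.aestronglyMeasurable
  have hgint : Integrable (fun x => g x * (starRingEnd ℂ) (f x)) ν := by
    apply Integrable.bdd_mul (c := (M + 1 : ℝ) * B)
    · apply Continuous.integrable_of_hasCompactSupport
      · exact hconjc.comp hfc
      · exact hfs.comp_left (map_zero _)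
    · exact hgaem
    · exact Filter.Eventually.of_forall hgb
  -- negative-power integrals
  have hneg : ∀ i : ℕ,
      ∫ u, f (u / (2:ℝ) ^ i) * (starRingEnd ℂ) (f u) ∂ν = (2:ℂ) ^ i * Pb i := by
    intro i
    have h2i : (0:ℝ) < 2 ^ i := pow_pos (by norm_num) i
    have h := hCoV' ((2:ℝ) ^ i) h2i (fun u => f (u / (2:ℝ) ^ i) * (starRingEnd ℂ) (f u))
    have heq : ∀ x : ℝ, f ((2:ℝ) ^ i * x / (2:ℝ) ^ i) * (starRingEnd ℂ) (f ((2:ℝ) ^ i * x))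
        = f x * (starRingEnd ℂ) (f ((2:ℝ) ^ i * x)) := by
      intro x
      rw [mul_div_cancel_left₀ _ (ne_of_gt h2i)]
    rw [h]
    simp only [heq]
    have hfold : (∫ x, f x * (starRingEnd ℂ) (f ((2:ℝ) ^ i * x)) ∂ν) = Pb i := by
      simp only [hPbdef]
    rw [hfold]
    push_cast
    ring
  set γ : ℂ := ∫ x, g x * (starRingEnd ℂ) (f x) ∂ν with hγdef
  set W : ℕ → ℂ := fun k => ∑ i ∈ Finset.range k, (2:ℂ) ^ i * Pb i with hWdef
  -- the β expansion
  have hβexp : ∀ k : ℕ, (∫ x, g x * (starRingEnd ℂ) (f ((2:ℝ) ^ k * x)) ∂ν)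
      = ((2:ℂ) ^ k)⁻¹ * ((2:ℂ) ^ k * Pb k - W k - Pb 0 + γ) := by
    intro k
    have h2k : (0:ℝ) < 2 ^ k := pow_pos (by norm_num) k
    have h := hCoV ((2:ℝ) ^ k) h2k (fun u => g (u / (2:ℝ) ^ k) * (starRingEnd ℂ) (f u))
    have heq : ∀ x : ℝ, g ((2:ℝ) ^ k * x / (2:ℝ) ^ k) * (starRingEnd ℂ) (f ((2:ℝ) ^ k * x))
        = g x * (starRingEnd ℂ) (f ((2:ℝ) ^ k * x)) := by
      intro x
      rw [mul_div_cancel_left₀ _ (ne_of_gt h2k)]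
    simp only [heq] at h
    rw [h]
    have hexp : (∫ u, g (u / (2:ℝ) ^ k) * (starRingEnd ℂ) (f u) ∂ν)
        = (2:ℂ) ^ k * Pb k - W k - Pb 0 + γ := by
      have hpt : ∀ u : ℝ, g (u / (2:ℝ) ^ k) * (starRingEnd ℂ) (f u)
          = ((f (u / (2:ℝ) ^ k) * (starRingEnd ℂ) (f u)
              - ∑ i ∈ Finset.range k, f (u / (2:ℝ) ^ i) * (starRingEnd ℂ) (f u))
              - f u * (starRingEnd ℂ) (f u)) + g u * (starRingEnd ℂ) (f u) := by
        intro u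
        rw [hGk k u, ← Finset.sum_mul]
        ring
      rw [integral_congr_ae (Filter.Eventually.of_forall hpt)]
      have hBint : Integrable
          (fun u => ∑ i ∈ Finset.range k, f (u / (2:ℝ) ^ i) * (starRingEnd ℂ) (f u)) ν :=
        integrable_finset_sum _ (fun i _ => hfcs i)
      have i1 : Integrable (fun u => f (u / (2:ℝ) ^ k) * (starRingEnd ℂ) (f u)
          - ∑ i ∈ Finset.range k, f (u / (2:ℝ) ^ i) * (starRingEnd ℂ) (f u)) ν :=
        (hfcs k).sub hBint
      have i2 : Integrable (fun u => f (u / (2:ℝ) ^ k) * (starRingEnd ℂ) (f u)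
          - ∑ i ∈ Finset.range k, f (u / (2:ℝ) ^ i) * (starRingEnd ℂ) (f u)
          - f u * (starRingEnd ℂ) (f u)) ν := i1.sub hfint
      rw [integral_add i2 hgint, integral_sub i1 hfint, integral_sub (hfcs k) hBint,
        hneg k, integral_finset_sum _ (fun i _ => hfcs i)]
      have hWeq : (∑ i ∈ Finset.range k, ∫ u, f (u / (2:ℝ) ^ i) * (starRingEnd ℂ) (f u) ∂ν)
          = W k := by
        rw [hWdef]
        exact Finset.sum_congr rfl fun i _ => hneg i
      rw [hWeq, ← hPb0, ← hγdef]
    rw [hexp]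
    push_cast
    ring
  -- norm facts in ℂ
  have hn2 : ‖(2:ℂ)‖ = 2 := by simp
  have hnormq : ∀ k : ℕ, ‖((2:ℂ) ^ k)⁻¹‖ = (2⁻¹:ℝ) ^ k := by
    intro k
    rw [norm_inv, norm_pow, hn2, ← inv_pow]
  have hnormhalf : ‖(2:ℂ)⁻¹‖ < 1 := by
    rw [norm_inv, hn2]
    norm_num
  have hqsumm : Summable (fun k : ℕ => ((2:ℂ)⁻¹) ^ k) :=
    summable_geometric_of_norm_lt_one hnormhalf
  have hgeo2 : (∑' k : ℕ, ((2:ℂ)⁻¹) ^ k) = 2 := by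
    rw [tsum_geometric_of_norm_lt_one hnormhalf]
    norm_num
  have hrhalf : Summable (fun k : ℕ => (2⁻¹:ℝ) ^ k) :=
    summable_geometric_of_lt_one (by norm_num) (by norm_num)
  have hite1 : ∀ z : ℂ, Summable (fun k : ℕ => if k = 0 then z else 0) := by
    intro z
    apply summable_of_ne_finset_zero (s := {0})
    intro b hb
    rw [if_neg (by simpa using hb)]
  have hPbsummable : Summable Pb :=
    summable_of_ne_finset_zero (s := Finset.range M)
      (fun m hm => hPbzero m (by simpa using hm))
  have hT1 : (∑' k, cc k * Pb k) = 2 * Pb 0 - ∑' k, Pb k := by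
    have he : ∀ k : ℕ, cc k * Pb k = (if k = 0 then 2 * Pb 0 else 0) - Pb k := by
      intro k
      cases k with
      | zero => rw [cc_zero]; simp; ring
      | succ k => rw [cc_succ]; simp
    rw [tsum_congr he, Summable.tsum_sub (hite1 _) hPbsummable, tsum_ite_eq]
  have hC₀ : ∃ C₀ : ℝ, ∀ k, ‖W k‖ ≤ C₀ := by
    refine ⟨∑ i ∈ Finset.range M, ‖(2:ℂ) ^ i * Pb i‖, fun k => ?_⟩
    have h1 : ‖W k‖ ≤ ∑ i ∈ Finset.range k, ‖(2:ℂ) ^ i * Pb i‖ := norm_sum_le _ _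
    have h2 : (∑ i ∈ Finset.range k, ‖(2:ℂ) ^ i * Pb i‖)
        ≤ ∑ i ∈ Finset.range M, ‖(2:ℂ) ^ i * Pb i‖ := by
      rcases le_or_gt k M with hkM | hkM
      · exact Finset.sum_le_sum_of_subset_of_nonneg (Finset.range_subset_range.mpr hkM)
          (fun i _ _ => norm_nonneg _)
      · refine le_of_eq ?_
        symm
        apply Finset.sum_subset (Finset.range_subset_range.mpr hkM.le)
        intro i _ hni
        rw [hPbzero i (by simpa using hni), mul_zero, norm_zero]
    linarith
  obtain ⟨C₀, hWb⟩ := hC₀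
  have hsum3 : Summable (fun k => cc k * (((2:ℂ) ^ k)⁻¹ * W k)) := by
    apply Summable.of_norm_bounded (g := fun k => (2⁻¹:ℝ) ^ k * C₀) (hrhalf.mul_right _)
    intro k
    rw [norm_mul, cc_norm, one_mul, norm_mul, hnormq]
    exact mul_le_mul_of_nonneg_left (hWb k) (by positivity)
  have hccq : Summable (fun k : ℕ => cc k * ((2:ℂ) ^ k)⁻¹) := by
    apply Summable.of_norm_bounded (g := fun k => (2⁻¹:ℝ) ^ k) hrhalf
    intro k
    rw [norm_mul, cc_norm, one_mul, hnormq]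
  have hT2 : (∑' k : ℕ, cc k * ((2:ℂ) ^ k)⁻¹) = 0 := by
    have he : ∀ k : ℕ, cc k * ((2:ℂ) ^ k)⁻¹ = (if k = 0 then (2:ℂ) else 0) - ((2:ℂ)⁻¹) ^ k := by
      intro k
      cases k with
      | zero => rw [cc_zero]; norm_num
      | succ k => rw [cc_succ, ← inv_pow]; simp
    rw [tsum_congr he, Summable.tsum_sub (hite1 _) hqsumm, tsum_ite_eq, hgeo2, sub_self]
  have hT3 : (∑' k : ℕ, ((2:ℂ) ^ k)⁻¹ * W k) = ∑' k, Pb k := by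
    classical
    have hunorm : Summable (fun k : ℕ => ‖if k = 0 then (0:ℂ) else ((2:ℂ) ^ k)⁻¹‖) := by
      apply Summable.of_nonneg_of_le (fun _ => norm_nonneg _) (fun k => ?_) hrhalf
      split
      · simp only [norm_zero]
        positivity
      · rw [hnormq]
    have hvnorm : Summable (fun k => ‖Pb k‖) := by
      apply summable_of_ne_finset_zero (s := Finset.range M)
      intro m hm
      rw [hPbzero m (by simpa using hm), norm_zero]
    have hC := tsum_mul_tsum_eq_tsum_sum_range_of_summable_norm hunorm hvnorm
    have husum : (∑' k : ℕ, if k = 0 then (0:ℂ) else ((2:ℂ) ^ k)⁻¹) = 1 := by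
      have he : ∀ k : ℕ, (if k = 0 then (0:ℂ) else ((2:ℂ) ^ k)⁻¹)
          = ((2:ℂ)⁻¹) ^ k - (if k = 0 then 1 else 0) := by
        intro k
        cases k with
        | zero => simp
        | succ k => rw [← inv_pow]; simp
      rw [tsum_congr he, Summable.tsum_sub hqsumm (hite1 _), hgeo2, tsum_ite_eq]
      norm_num
    have hterm : ∀ n : ℕ,
        (∑ k ∈ Finset.range (n + 1), (if k = 0 then (0:ℂ) else ((2:ℂ) ^ k)⁻¹) * Pb (n - k))
          = ((2:ℂ) ^ n)⁻¹ * W n := by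
      intro n
      rw [Finset.sum_range_succ']
      have hz : (if (0:ℕ) = 0 then (0:ℂ) else ((2:ℂ) ^ 0)⁻¹) * Pb (n - 0) = 0 := by simp
      rw [hz, add_zero]
      have hstep : ∀ i : ℕ, (if i + 1 = 0 then (0:ℂ) else ((2:ℂ) ^ (i + 1))⁻¹) * Pb (n - (i + 1))
          = ((2:ℂ) ^ (i + 1))⁻¹ * Pb (n - (i + 1)) := by
        intro i
        rw [if_neg (Nat.succ_ne_zero i)]
      simp only [hstep]
      have hWn : W n = ∑ i ∈ Finset.range n, (2:ℂ) ^ i * Pb i := by rw [hWdef]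
      rw [hWn, Finset.mul_sum,
        ← Finset.sum_range_reflect (fun i => ((2:ℂ) ^ n)⁻¹ * ((2:ℂ) ^ i * Pb i)) n]
      apply Finset.sum_congr rfl
      intro j hj
      rw [Finset.mem_range] at hj
      have hjn : (j + 1) + (n - 1 - j) = n := by omega
      have hpow : (2:ℂ) ^ n = 2 ^ (j + 1) * 2 ^ (n - 1 - j) := by rw [← pow_add, hjn]
      have hind : n - (j + 1) = n - 1 - j := by omega
      have h1 : ((2:ℂ)) ^ (j+1) ≠ 0 := pow_ne_zero _ two_ne_zero
      have h2 : ((2:ℂ)) ^ (n-1-j) ≠ 0 := pow_ne_zero _ two_ne_zero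
      rw [hind, hpow]
      field_simp
    calc (∑' k : ℕ, ((2:ℂ) ^ k)⁻¹ * W k)
        = ∑' n : ℕ, ∑ k ∈ Finset.range (n + 1),
            (if k = 0 then (0:ℂ) else ((2:ℂ) ^ k)⁻¹) * Pb (n - k) := (tsum_congr hterm).symm
      _ = (∑' k : ℕ, if k = 0 then (0:ℂ) else ((2:ℂ) ^ k)⁻¹) * ∑' k, Pb k := hC.symm
      _ = ∑' k, Pb k := by rw [husum, one_mul]
  have hccW : ∀ k, cc k * (((2:ℂ) ^ k)⁻¹ * W k) = -(((2:ℂ) ^ k)⁻¹ * W k) := by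
    intro k
    cases k with
    | zero =>
      have : W 0 = 0 := by simp [hWdef]
      rw [this]
      simp
    | succ k => rw [cc_succ]; ring
  have hsum1 : Summable (fun k => cc k * Pb k) :=
    summable_of_ne_finset_zero (s := Finset.range M)
      (fun m hm => by rw [hPbzero m (by simpa using hm), mul_zero])
  have hsumB : (∑' k, (cc k * ((2:ℂ) ^ k)⁻¹) * (γ - Pb 0)) = 0 := by
    rw [tsum_mul_right, hT2, zero_mul]
  have hsumC : (∑' k, cc k * (((2:ℂ) ^ k)⁻¹ * W k)) = -∑' k, Pb k := by
    rw [tsum_congr hccW, tsum_neg, hT3]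
  -- expansion of the conjugate factor and interchange of sum and integral
  have hccstar : ∀ k, star (cc k) = cc k := fun k => by
    rw [← starRingEnd_apply]; exact cc_conj k
  have hpt2 : ∀ x, g x * (starRingEnd ℂ) (g x)
      = ∑' k : ℕ, cc k * (g x * (starRingEnd ℂ) (f ((2:ℝ) ^ k * x))) := by
    intro x
    have h1 : (starRingEnd ℂ) (g x)
        = ∑' k : ℕ, cc k * (starRingEnd ℂ) (f ((2:ℝ) ^ k * x)) := by
      rw [hg x, starRingEnd_apply, tsum_star]
      exact tsum_congr fun k => by
        rw [star_mul', hccstar k, starRingEnd_apply]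
    rw [h1, ← tsum_mul_left]
    exact tsum_congr fun k => by ring
  have hmeas : ∀ k : ℕ, AEStronglyMeasurable
      (fun x => cc k * (g x * (starRingEnd ℂ) (f ((2:ℝ) ^ k * x)))) ν := by
    intro k
    have hc : Continuous (fun x : ℝ => (starRingEnd ℂ) (f ((2:ℝ) ^ k * x))) :=
      hconjc.comp (hfc.comp (continuous_const.mul continuous_id))
    exact (hgaem.mul hc.aestronglyMeasurable).const_mul _
  have hterm : ∀ k : ℕ, ∫⁻ x, ‖cc k * (g x * (starRingEnd ℂ) (f ((2:ℝ) ^ k * x)))‖₊ ∂ν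
      ≤ ENNReal.ofReal ((M + 1 : ℝ) * B * B) * ENNReal.ofReal (R * (2⁻¹:ℝ) ^ k) := by
    intro k
    apply lintegral_nnnorm_le
    · positivity
    · intro x hx
      have hf2 : f ((2:ℝ) ^ k * x) ≠ 0 := by
        intro h0
        apply hx
        rw [h0, map_zero, mul_zero, mul_zero]
      obtain ⟨hl, hr⟩ := hfR _ hf2
      have h2k : (0:ℝ) < 2 ^ k := pow_pos (by norm_num) k
      constructor
      · nlinarith
      · have hq : (2⁻¹:ℝ) ^ k = ((2:ℝ) ^ k)⁻¹ := by rw [inv_pow]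
        rw [hq, ← div_eq_mul_inv, le_div_iff₀ h2k]
        linarith
    · intro x
      rw [norm_mul, cc_norm, one_mul, norm_mul, starRingEnd_apply, norm_star]
      exact mul_le_mul (hgb x) (hBf _) (norm_nonneg _) (by positivity)
  have hfin : (∑' k : ℕ, ∫⁻ x, ‖cc k * (g x * (starRingEnd ℂ) (f ((2:ℝ) ^ k * x)))‖₊ ∂ν) ≠ ⊤ := by
    apply ne_top_of_le_ne_top _ (ENNReal.tsum_le_tsum hterm)
    have hR0 : (0:ℝ) ≤ R := le_trans hε.le hεR
    have he : ∀ k : ℕ, ENNReal.ofReal (R * (2⁻¹:ℝ) ^ k)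
        = ENNReal.ofReal R * (ENNReal.ofReal 2⁻¹) ^ k := by
      intro k
      rw [ENNReal.ofReal_mul hR0, ENNReal.ofReal_pow (by norm_num)]
    simp only [he]
    rw [ENNReal.tsum_mul_left, ENNReal.tsum_mul_left, ENNReal.tsum_geometric]
    have ht1 : (ENNReal.ofReal 2⁻¹) < 1 := by
      rw [← ENNReal.ofReal_one]
      exact ENNReal.ofReal_lt_ofReal_iff_of_nonneg (by norm_num) |>.mpr (by norm_num)
    apply ENNReal.mul_ne_top ENNReal.ofReal_ne_top
    apply ENNReal.mul_ne_top ENNReal.ofReal_ne_top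
    rw [ENNReal.inv_ne_top]
    exact (tsub_pos_of_lt ht1).ne'
  have hmain : (∫ x, g x * (starRingEnd ℂ) (g x) ∂ν)
      = ∑' k : ℕ, cc k * ∫ x, g x * (starRingEnd ℂ) (f ((2:ℝ) ^ k * x)) ∂ν := by
    rw [integral_congr_ae (Filter.Eventually.of_forall hpt2), integral_tsum hmeas hfin]
    exact tsum_congr fun k => by rw [integral_const_mul]
  -- final evaluation
  have hfinal : (∫ x, g x * (starRingEnd ℂ) (g x) ∂ν) = 2 * Pb 0 := by
    rw [hmain]
    calc (∑' k : ℕ, cc k * ∫ x, g x * (starRingEnd ℂ) (f ((2:ℝ) ^ k * x)) ∂ν)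
        = ∑' k : ℕ, ((cc k * Pb k + (cc k * ((2:ℂ) ^ k)⁻¹) * (γ - Pb 0))
            - cc k * (((2:ℂ) ^ k)⁻¹ * W k)) := by
          refine tsum_congr fun k => ?_
          rw [hβexp k]
          have h2kne : ((2:ℂ)) ^ k ≠ 0 := pow_ne_zero _ two_ne_zero
          field_simp
          ring
      _ = ((∑' k, cc k * Pb k) + ∑' k, (cc k * ((2:ℂ) ^ k)⁻¹) * (γ - Pb 0))
            - ∑' k, cc k * (((2:ℂ) ^ k)⁻¹ * W k) := by
          rw [Summable.tsum_sub (hsum1.add (hccq.mul_right _)) hsum3,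
            Summable.tsum_add hsum1 (hccq.mul_right _)]
      _ = ((2 * Pb 0 - ∑' k, Pb k) + 0) - (-∑' k, Pb k) := by rw [hT1, hsumB, hsumC]
      _ = 2 * Pb 0 := by ring
  rw [hfinal, hPb0]

end Key

lemma norm_toLp_sq (φ : ℝ → ℂ) (hφ : MemLp φ 2 ν) :
    ‖hφ.toLp φ‖ ^ 2 = (∫ x, φ x * (starRingEnd ℂ) (φ x) ∂ν).re := by
  have h1 := inner_self_eq_norm_sq (𝕜 := ℂ) (hφ.toLp φ)
  rw [← h1, MeasureTheory.L2.inner_def]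
  have h2 : (∫ a, (inner ℂ (hφ.toLp φ a) (hφ.toLp φ a) : ℂ) ∂ν)
      = ∫ a, φ a * (starRingEnd ℂ) (φ a) ∂ν := by
    apply integral_congr_ae
    filter_upwards [hφ.coeFn_toLp] with a ha
    rw [ha, RCLike.inner_apply, mul_comm]
  rw [h2]
  simp [RCLike.re_to_complex]

theorem stmt8 (T : Lp ℂ 2 ν →L[ℂ] Lp ℂ 2 ν)
    (hT : ∀ (f : ℝ → ℂ) (hf : MemLp f 2 ν),
      Continuous f → HasCompactSupport f → tsupport f ⊆ Set.Ioi 0 →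
      ∃ h2 : MemLp (Tfun aSeq8 f) 2 ν, T (hf.toLp f) = h2.toLp (Tfun aSeq8 f)) :
    ∀ u : Lp ℂ 2 ν, ‖T u‖ ^ 2 = 2 * ‖u‖ ^ 2 := by
  intro u
  set CS : Set (Lp ℂ 2 ν) := {v | ‖T v‖ ^ 2 = 2 * ‖v‖ ^ 2} with hCSdef
  have hclosed : IsClosed CS := by
    apply isClosed_eq
    · exact (T.continuous.norm.pow 2)
    · exact continuous_const.mul (continuous_norm.pow 2)
  have hmem : ∀ (φ : ℝ → ℂ), Continuous φ → HasCompactSupport φ →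
      tsupport φ ⊆ Set.Ioi 0 → ∀ (hφ : MemLp φ 2 ν), hφ.toLp φ ∈ CS := by
    intro φ hc hcs hts hφ
    obtain ⟨h2, hTφ⟩ := hT φ hφ hc hcs hts
    have hkey := key hc hcs hts h2
    simp only [hCSdef, Set.mem_setOf_eq]
    rw [hTφ, norm_toLp_sq _ h2, norm_toLp_sq _ hφ, hkey]
    simp
  have happrox : ∀ δ : ℝ, 0 < δ → ∃ w ∈ CS, dist u w < δ := by
    intro δ hδ
    have hne : (ENNReal.ofReal (δ / 4)) ≠ 0 := by
      rw [Ne, ENNReal.ofReal_eq_zero]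
      push_neg
      positivity
    obtain ⟨g₀, hg₀cs, hg₀err, hg₀c, hg₀mem⟩ :=
      (Lp.memLp u).exists_hasCompactSupport_eLpNorm_sub_le (by norm_num) hne
    obtain ⟨B₁, hB₁0, hB₁⟩ : ∃ B₁, 0 ≤ B₁ ∧ ∀ y, ‖g₀ y‖ ≤ B₁ := by
      obtain ⟨x₀, hx₀⟩ := (hg₀c.norm).exists_forall_ge_of_hasCompactSupport hg₀cs.norm
      exact ⟨‖g₀ x₀‖, norm_nonneg _, hx₀⟩
    set t : ℝ := δ / (4 * (B₁ + 1)) with htdef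
    have ht0 : 0 < t := by positivity
    set δ' : ℝ := t ^ 2 / 2 with hδ'def
    have hδ'pos : 0 < δ' := by positivity
    set χ : ℝ → ℝ := fun x => min 1 (max 0 ((x - δ') / δ')) with hχdef
    have hχc : Continuous χ :=
      continuous_const.min (continuous_const.max ((continuous_id.sub continuous_const).div_const _))
    have hχ01 : ∀ x, 0 ≤ χ x ∧ χ x ≤ 1 := fun x =>
      ⟨le_min zero_le_one (le_max_left 0 _), min_le_left _ _⟩
    have hχ0 : ∀ x, x ≤ δ' → χ x = 0 := by
      intro x hx
      have h1 : (x - δ') / δ' ≤ 0 :=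
        div_nonpos_iff.mpr (Or.inr ⟨by linarith, hδ'pos.le⟩)
      simp only [hχdef]
      rw [max_eq_left h1, min_eq_right zero_le_one]
    have hχ1 : ∀ x, 2 * δ' ≤ x → χ x = 1 := by
      intro x hx
      have h1 : 1 ≤ (x - δ') / δ' := by
        rw [le_div_iff₀ hδ'pos]
        linarith
      simp only [hχdef]
      rw [max_eq_right (le_trans zero_le_one h1), min_eq_left h1]
    set g₁ : ℝ → ℂ := fun x => (χ x : ℂ) * g₀ x with hg₁def
    have hg₁c : Continuous g₁ := (Complex.continuous_ofReal.comp hχc).mul hg₀c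
    have hg₁cs : HasCompactSupport g₁ := hg₀cs.mul_left
    have hg₁ts : tsupport g₁ ⊆ Set.Ioi 0 := by
      have hsupp1 : Function.support g₁ ⊆ Set.Ioi δ' := by
        intro x hx
        rw [Function.mem_support] at hx
        by_contra hx2
        apply hx
        rw [hg₁def]
        simp only
        rw [hχ0 x (by simpa using hx2)]
        simp
      calc tsupport g₁ = closure (Function.support g₁) := rfl
        _ ⊆ closure (Set.Ioi δ') := closure_mono hsupp1
        _ = Set.Ici δ' := closure_Ioi δ'
        _ ⊆ Set.Ioi 0 := fun x hx => lt_of_lt_of_le hδ'pos hx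
    have hg₁mem : MemLp g₁ 2 ν := hg₁c.memLp_of_hasCompactSupport hg₁cs
    -- error bound between g₀ and g₁
    have herr2 : eLpNorm (fun x => g₀ x - g₁ x) 2 ν ≤ ENNReal.ofReal (δ / 4) := by
      have hae : ∀ᵐ x ∂ν, x ∈ Set.Ioi (0:ℝ) := ae_restrict_mem measurableSet_Ioi
      have hmono : ∀ᵐ x ∂ν, ‖g₀ x - g₁ x‖
          ≤ ‖Set.indicator (Set.Ioc 0 (2 * δ')) (fun _ => (B₁:ℂ)) x‖ := by
        filter_upwards [hae] with x hx
        rcases le_or_gt x (2 * δ') with hx2 | hx2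
        · have hmem' : x ∈ Set.Ioc (0:ℝ) (2 * δ') := ⟨hx, hx2⟩
          rw [Set.indicator_of_mem hmem']
          have he : g₀ x - g₁ x = ((1 - χ x : ℝ) : ℂ) * g₀ x := by
            rw [hg₁def]
            push_cast
            ring
          rw [he, norm_mul, Complex.norm_real, Real.norm_eq_abs]
          have h1 : |1 - χ x| ≤ 1 :=
            abs_le.mpr ⟨by linarith [(hχ01 x).2], by linarith [(hχ01 x).1]⟩
          have h2 : ‖(B₁:ℂ)‖ = B₁ := by
            rw [Complex.norm_real, Real.norm_eq_abs, abs_of_nonneg hB₁0]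
          rw [h2]
          calc |1 - χ x| * ‖g₀ x‖ ≤ 1 * B₁ :=
                mul_le_mul h1 (hB₁ x) (norm_nonneg _) zero_le_one
            _ = B₁ := one_mul _
        · have he : g₀ x - g₁ x = 0 := by
            rw [hg₁def]
            simp only
            rw [hχ1 x hx2.le]
            simp
          rw [he, norm_zero]
          exact norm_nonneg _
      have hν : ν (Set.Ioc 0 (2 * δ')) = ENNReal.ofReal (2 * δ') := by
        unfold ν
        rw [Measure.restrict_apply measurableSet_Ioc,
          Set.inter_eq_left.mpr Set.Ioc_subset_Ioi_self, Real.volume_Ioc]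
        norm_num
      calc eLpNorm (fun x => g₀ x - g₁ x) 2 ν
          ≤ eLpNorm (Set.indicator (Set.Ioc 0 (2 * δ')) (fun _ => (B₁:ℂ))) 2 ν :=
            eLpNorm_mono_ae hmono
        _ = ‖(B₁:ℂ)‖₊ * ν (Set.Ioc 0 (2 * δ')) ^ (1 / (2:ℝ≥0∞).toReal) :=
            eLpNorm_indicator_const measurableSet_Ioc (by norm_num) (by norm_num)
        _ ≤ ENNReal.ofReal (δ / 4) := by
            rw [hν]
            have h2δ' : 2 * δ' = t ^ 2 := by rw [hδ'def]; ring
            rw [h2δ']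
            have hcoe : (‖(B₁:ℂ)‖₊ : ℝ≥0∞) = ENNReal.ofReal B₁ := by
              rw [← enorm_eq_nnnorm, ← ofReal_norm, Complex.norm_real, Real.norm_eq_abs,
                abs_of_nonneg hB₁0]
            rw [hcoe]
            have htop : (2:ℝ≥0∞).toReal = 2 := by norm_num
            rw [htop]
            have hrpow : (ENNReal.ofReal (t ^ 2)) ^ ((1:ℝ) / 2) = ENNReal.ofReal t := by
              rw [ENNReal.ofReal_rpow_of_nonneg (by positivity) (by norm_num)]
              congr 1
              rw [← Real.rpow_natCast t 2, ← Real.rpow_mul ht0.le]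
              norm_num
            rw [hrpow, ← ENNReal.ofReal_mul hB₁0]
            apply ENNReal.ofReal_le_ofReal
            have h1 : (B₁ + 1) * t = δ / 4 := by
              rw [htdef]
              field_simp
            nlinarith
    set w₀ : Lp ℂ 2 ν := hg₀mem.toLp g₀ with hw₀def
    set w : Lp ℂ 2 ν := hg₁mem.toLp g₁ with hwdef
    have hd1 : ‖u - w₀‖ ≤ δ / 4 := by
      have he1 : (⇑(u - w₀) : ℝ → ℂ) =ᵐ[ν] (⇑u - g₀) := by
        filter_upwards [Lp.coeFn_sub u w₀, hg₀mem.coeFn_toLp] with x h1 h2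
        rw [h1]
        simp only [Pi.sub_apply]
        rw [h2]
      rw [Lp.norm_def, eLpNorm_congr_ae he1]
      have hm := ENNReal.toReal_mono ENNReal.ofReal_ne_top hg₀err
      rwa [ENNReal.toReal_ofReal (by positivity)] at hm
    have hd2 : ‖w₀ - w‖ ≤ δ / 4 := by
      have he1 : (⇑(w₀ - w) : ℝ → ℂ) =ᵐ[ν] (fun x => g₀ x - g₁ x) := by
        filter_upwards [Lp.coeFn_sub w₀ w, hg₀mem.coeFn_toLp, hg₁mem.coeFn_toLp]
          with x h1 h2 h3
        rw [h1]
        simp only [Pi.sub_apply]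
        rw [h2, h3]
      rw [Lp.norm_def, eLpNorm_congr_ae he1]
      have hm := ENNReal.toReal_mono ENNReal.ofReal_ne_top herr2
      rwa [ENNReal.toReal_ofReal (by positivity)] at hm
    refine ⟨w, hmem g₁ hg₁c hg₁cs hg₁ts hg₁mem, ?_⟩
    calc dist u w ≤ dist u w₀ + dist w₀ w := dist_triangle _ _ _
      _ = ‖u - w₀‖ + ‖w₀ - w‖ := by rw [dist_eq_norm, dist_eq_norm]
      _ ≤ δ / 4 + δ / 4 := add_le_add hd1 hd2
      _ < δ := by linarith
  have hu : u ∈ closure CS := Metric.mem_closure_iff.mpr happrox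
  exact hclosed.closure_subset hu
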